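/- In a framed representation setting: let (M,f) be θ̂-stable of dimension d̂ (d of slope μ), decomposed by a subrepresentation M' ⊆ M of slope μ with quotient M'' = M/M'' and induced framing f'' on M''. Then for every proper subrepresentation U'' of M'' containing the image of f'', one has μ(U'') < μ, i.e., (M'', f'') is framed stable. -/
import Mathlib
open Module

lemma finrank_comap_of_surjective {E F : Type*} [AddCommGroup E] [Module ℂ E]
    [AddCommGroup F] [Module ℂ F] [FiniteDimensional ℂ E]
    (π : E →ₗ[ℂ] F) (hπ : Function.Surjective π) (W : Submodule ℂ F) :
    finrank ℂ (W.comap π) = finrank ℂ (LinearMap.ker π) + finrank ℂ W := by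
  have hmap : (W.comap π).map π = W := Submodule.map_comap_eq_self (by
    rw [LinearMap.range_eq_top.mpr hπ]; exact le_top)
  have hker : LinearMap.ker π ≤ W.comap π := by
    intro x hx; simp [Submodule.mem_comap, LinearMap.mem_ker.mp hx]
  let g := π.domRestrict (W.comap π)
  have hrange : LinearMap.range g = W := by
    rw [LinearMap.range_domRestrict]; exact hmap
  have hkerg : LinearMap.ker g = (LinearMap.ker π).comap (W.comap π).subtype := by
    ext x; simp [g, LinearMap.mem_ker, Submodule.mem_comap]
  have h := g.finrank_range_add_finrank_ker
  rw [hrange, hkerg] at h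
  have e : ((LinearMap.ker π).comap (W.comap π).subtype) ≃ₗ[ℂ] LinearMap.ker π :=
    Submodule.comapSubtypeEquivOfLe hker
  rw [e.finrank_eq] at h
  omega

lemma mediant_lt (T' S' T'' S'' μ : ℚ) (hS' : 0 ≤ S') (hS'' : 0 < S'')
    (hμ : S' ≠ 0 → T' = μ * S') (hT'0 : S' = 0 → T' = 0)
    (h : (T' + T'') / (S' + S'') < μ) : T'' / S'' < μ := by
  rcases eq_or_lt_of_le hS' with h0 | h0
  · rw [← h0, zero_add, hT'0 h0.symm, zero_add] at h; exact h
  · rw [div_lt_iff₀ (by linarith)] at h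
    rw [hμ (ne_of_gt h0)] at h
    rw [div_lt_iff₀ hS'']; nlinarith

lemma mediant_le (T' S' T'' S'' μ : ℚ) (hS' : 0 ≤ S') (hS'' : 0 < S'')
    (hμ : S' ≠ 0 → T' = μ * S') (hT'0 : S' = 0 → T' = 0)
    (h : (T' + T'') / (S' + S'') ≤ μ) : T'' / S'' ≤ μ := by
  rcases eq_or_lt_of_le hS' with h0 | h0
  · rw [← h0, zero_add, hT'0 h0.symm, zero_add] at h; exact h
  · rw [div_le_iff₀ (by linarith)] at h
    rw [hμ (ne_of_gt h0)] at h
    rw [div_le_iff₀ hS'']; nlinarith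



/-- Subrepresentation condition. -/
def IsSubrep {V A : Type} (s t : A → V) {d : V → ℕ}
    (M : ∀ a : A, (Fin (d (s a)) → ℂ) →ₗ[ℂ] (Fin (d (t a)) → ℂ))
    (U : ∀ i, Submodule ℂ (Fin (d i) → ℂ)) : Prop :=
  ∀ a : A, (U (s a)).map (M a) ≤ U (t a)

/-- Slope `μ_θ(c) = θ(c)/Σ_i c_i`. -/
noncomputable def slopeDim {V : Type} [Fintype V] (θ : V → ℤ) (c : V → ℕ) : ℚ :=
  (∑ i, (θ i : ℚ) * c i) / (∑ i, (c i : ℚ))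

/-- `θ`-semi-stability of a nonzero representation `M` of dimension vector `d`. -/
def IsSemistable {V A : Type} [Fintype V] (s t : A → V) (θ : V → ℤ) (d : V → ℕ)
    (M : ∀ a : A, (Fin (d (s a)) → ℂ) →ₗ[ℂ] (Fin (d (t a)) → ℂ)) : Prop :=
  d ≠ 0 ∧ ∀ U : ∀ i, Submodule ℂ (Fin (d i) → ℂ), IsSubrep s t M U →
    U ≠ (fun _ => ⊥) → slopeDim θ (fun i => finrank ℂ (U i)) ≤ slopeDim θ d

/-- Framed stability (Engel–Reineke characterisation): `(M,f)` is `θ̂`-stable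
iff `M` is `θ`-semi-stable and every nonzero proper subrepresentation of `M`
containing the image of the framing `f` has slope strictly less than `μ(M)`. -/
def IsFramedStable {V A : Type} [Fintype V] (s t : A → V) (θ : V → ℤ)
    (d n : V → ℕ)
    (M : ∀ a : A, (Fin (d (s a)) → ℂ) →ₗ[ℂ] (Fin (d (t a)) → ℂ))
    (f : ∀ i, (Fin (n i) → ℂ) →ₗ[ℂ] (Fin (d i) → ℂ)) : Prop :=
  IsSemistable s t θ d M ∧
    ∀ U : ∀ i, Submodule ℂ (Fin (d i) → ℂ), IsSubrep s t M U →
      (∀ i, LinearMap.range (f i) ≤ U i) → U ≠ (fun _ => ⊥) → (∃ i, U i ≠ ⊤) →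
      slopeDim θ (fun i => finrank ℂ (U i)) < slopeDim θ d

/-- if `(M,f)` is framed stable of slope `μ` and
`0 → M' → M → M'' → 0` is a short exact sequence with `μ(M') = μ(M'') = μ(M)`,
then the quotient with the induced framing `f'' = π ∘ f` is framed stable: `M''`
is semi-stable and every nonzero proper subrepresentation `U''` of `M''`
containing the image of `f''` satisfies `μ(U'') < μ`. -/
theorem framed_quotient_stable {V A : Type} [Fintype V] (s t : A → V)
    (θ : V → ℤ) (d' d d'' n : V → ℕ)
    (M' : ∀ a : A, (Fin (d' (s a)) → ℂ) →ₗ[ℂ] (Fin (d' (t a)) → ℂ))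
    (M : ∀ a : A, (Fin (d (s a)) → ℂ) →ₗ[ℂ] (Fin (d (t a)) → ℂ))
    (M'' : ∀ a : A, (Fin (d'' (s a)) → ℂ) →ₗ[ℂ] (Fin (d'' (t a)) → ℂ))
    (ι : ∀ i, (Fin (d' i) → ℂ) →ₗ[ℂ] (Fin (d i) → ℂ))
    (π : ∀ i, (Fin (d i) → ℂ) →ₗ[ℂ] (Fin (d'' i) → ℂ))
    (hι : ∀ i, Function.Injective (ι i))
    (hπ : ∀ i, Function.Surjective (π i))
    (hexact : ∀ i, LinearMap.range (ι i) = LinearMap.ker (π i))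
    (hcommι : ∀ a, (ι (t a)).comp (M' a) = (M a).comp (ι (s a)))
    (hcommπ : ∀ a, (π (t a)).comp (M a) = (M'' a).comp (π (s a)))
    (hd'' : d'' ≠ 0)
    (h1 : slopeDim θ d' = slopeDim θ d) (h2 : slopeDim θ d = slopeDim θ d'')
    (f : ∀ i, (Fin (n i) → ℂ) →ₗ[ℂ] (Fin (d i) → ℂ))
    (hstable : IsFramedStable s t θ d n M f) :
    IsFramedStable s t θ d'' n M'' (fun i => (π i).comp (f i)) := by

  obtain ⟨⟨hd0, hss⟩, hfr⟩ := hstable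
  -- general facts about the pullback U = comap π U''
  have hcomap_rank : ∀ (i : V) (W : Submodule ℂ (Fin (d'' i) → ℂ)),
      finrank ℂ (W.comap (π i)) = d' i + finrank ℂ W := by
    intro i W
    have h := finrank_comap_of_surjective (π i) (hπ i) W
    have hkerrank : finrank ℂ (LinearMap.ker (π i)) = d' i := by
      rw [← hexact i, LinearMap.finrank_range_of_inj (hι i)]
      simp
    rw [hkerrank] at h; exact h
  have hsubrep : ∀ (U'' : ∀ i, Submodule ℂ (Fin (d'' i) → ℂ)),
      IsSubrep s t M'' U'' →
      IsSubrep s t M (fun i => (U'' i).comap (π i)) := by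
    intro U'' hU'' a x hx
    simp only [Submodule.mem_map, Submodule.mem_comap] at hx ⊢
    obtain ⟨y, hy, rfl⟩ := hx
    have : π (t a) (M a y) = M'' a (π (s a) y) := by
      have := congrArg (fun g => g y) (hcommπ a); simpa using this
    rw [this]
    exact hU'' a ⟨π (s a) y, hy, rfl⟩
  -- slope of the pullback
  have hslope_eq : ∀ (U'' : ∀ i, Submodule ℂ (Fin (d'' i) → ℂ)),
      slopeDim θ (fun i => finrank ℂ ((U'' i).comap (π i)))
        = ((∑ i, (θ i : ℚ) * d' i) + ∑ i, (θ i : ℚ) * finrank ℂ (U'' i)) /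
          ((∑ i, (d' i : ℚ)) + ∑ i, (finrank ℂ (U'' i) : ℚ)) := by
    intro U''
    simp only [slopeDim, hcomap_rank]
    push_cast
    rw [← Finset.sum_add_distrib, ← Finset.sum_add_distrib]
    ring_nf
  have hS'nonneg : (0:ℚ) ≤ ∑ i, (d' i : ℚ) := Finset.sum_nonneg fun i _ => by positivity
  have hμ' : (∑ i, (d' i : ℚ)) ≠ 0 → (∑ i, (θ i : ℚ) * d' i) = slopeDim θ d * ∑ i, (d' i : ℚ) := by
    intro hne
    have := h1
    rw [slopeDim, div_eq_iff hne] at this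
    exact this
  have hT'0 : (∑ i, (d' i : ℚ)) = 0 → (∑ i, (θ i : ℚ) * d' i) = 0 := by
    intro h0
    have hz : ∀ i ∈ Finset.univ, (d' i : ℚ) = 0 := by
      intro i _
      have := (Finset.sum_eq_zero_iff_of_nonneg (fun i _ => by positivity)).mp h0
      exact this i (Finset.mem_univ i)
    exact Finset.sum_eq_zero fun i _ => by rw [hz i (Finset.mem_univ i), mul_zero]
  have hSpos : ∀ (U'' : ∀ i, Submodule ℂ (Fin (d'' i) → ℂ)), U'' ≠ (fun _ => ⊥) →
      (0:ℚ) < ∑ i, (finrank ℂ (U'' i) : ℚ) := by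
    intro U'' hne
    have : ∃ i, U'' i ≠ ⊥ := by
      by_contra h
      push_neg at h
      exact hne (funext fun i => h i)
    obtain ⟨i, hi⟩ := this
    have hpos : 0 < finrank ℂ (U'' i) := by
      rcases Nat.eq_zero_or_pos (finrank ℂ (U'' i)) with h0 | h0
      · exact absurd (Submodule.finrank_eq_zero.mp h0) hi
      · exact h0
    refine Finset.sum_pos' (fun j _ => by positivity) ⟨i, Finset.mem_univ i, by exact_mod_cast hpos⟩
  have hUnebot : ∀ (U'' : ∀ i, Submodule ℂ (Fin (d'' i) → ℂ)), U'' ≠ (fun _ => ⊥) →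
      (fun i => (U'' i).comap (π i)) ≠ (fun _ => ⊥) := by
    intro U'' hne
    have : ∃ i, U'' i ≠ ⊥ := by
      by_contra h; push_neg at h; exact hne (funext fun i => h i)
    obtain ⟨i, hi⟩ := this
    intro hbot
    have h0 : (U'' i).comap (π i) = ⊥ := congrFun hbot i
    have := hcomap_rank i (U'' i)
    rw [h0] at this
    simp only [finrank_bot] at this
    have hpos : 0 < finrank ℂ (U'' i) := by
      rcases Nat.eq_zero_or_pos (finrank ℂ (U'' i)) with h0' | h0'
      · exact absurd (Submodule.finrank_eq_zero.mp h0') hi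
      · exact h0'
    omega
  constructor
  · -- semistability of M''
    refine ⟨hd'', fun U'' hU'' hne => ?_⟩
    have hle := hss (fun i => (U'' i).comap (π i)) (hsubrep U'' hU'') (hUnebot U'' hne)
    rw [hslope_eq U''] at hle
    rw [slopeDim, ← h2]
    exact mediant_le _ _ _ _ _ hS'nonneg (hSpos U'' hne) hμ' hT'0 hle
  · -- framed part
    intro U'' hU'' hfU hne hntop
    have hfU' : ∀ i, LinearMap.range (f i) ≤ (U'' i).comap (π i) := by
      intro i x hx
      obtain ⟨y, rfl⟩ := hx
      exact hfU i ⟨y, rfl⟩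
    have hntop' : ∃ i, (U'' i).comap (π i) ≠ ⊤ := by
      obtain ⟨i, hi⟩ := hntop
      refine ⟨i, fun htop => hi ?_⟩
      have : ((U'' i).comap (π i)).map (π i) = U'' i :=
        Submodule.map_comap_eq_self (by rw [LinearMap.range_eq_top.mpr (hπ i)]; exact le_top)
      rw [htop, Submodule.map_top, LinearMap.range_eq_top.mpr (hπ i)] at this
      exact this.symm
    have hlt := hfr (fun i => (U'' i).comap (π i)) (hsubrep U'' hU'') hfU'
      (hUnebot U'' hne) hntop'
    rw [hslope_eq U''] at hlt
    rw [slopeDim, ← h2]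
    exact mediant_lt _ _ _ _ _ hS'nonneg (hSpos U'' hne) hμ' hT'0 hlt
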